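/- Let L₁,…,L_K be closed subspaces of a real Hilbert space H and y = y₁ + ⋯ + y_K with yⱼ ∈ Lⱼ^⊥, y ≠ 0. Define ρ(y) = (sup over unit vectors g in (L₁^⊥ ∪ ⋯ ∪ L_K^⊥) of ⟨y, g⟩) / ‖y‖. Then ρ(y) ≥ ‖y‖ / (‖y₁‖ + ⋯ + ‖y_K‖). -/

import Mathlib

open RealInnerProductSpace

theorem rho_ge_norm_div_sum_norms
    {H : Type*} [NormedAddCommGroup H] [InnerProductSpace ℝ H] [CompleteSpace H]
    {K : ℕ} (L : Fin K → Submodule ℝ H)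
    (hclosed : ∀ k, IsClosed ((L k : Set H)))
    (y : Fin K → H) (hy : ∀ j, y j ∈ (L j)ᗮ)
    (hne : (∑ j, y j) ≠ 0) :
    sSup {r : ℝ | ∃ g : H, ‖g‖ = 1 ∧ (∃ j, g ∈ (L j)ᗮ) ∧ r = (inner ℝ (∑ j, y j) g : ℝ)} /
        ‖∑ j, y j‖ ≥
      ‖∑ j, y j‖ / ∑ j, ‖y j‖ := by
  classical
  set Y : H := ∑ j, y j with hY
  set S := {r : ℝ | ∃ g : H, ‖g‖ = 1 ∧ (∃ j, g ∈ (L j)ᗮ) ∧ r = (inner ℝ Y g : ℝ)}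
  have hYpos : (0:ℝ) < ‖Y‖ := norm_pos_iff.mpr hne
  have hTpos : (0:ℝ) < ∑ j, ‖y j‖ := by
    have h := norm_sum_le Finset.univ y
    have : (0:ℝ) < ‖∑ j, y j‖ := hYpos
    linarith
  -- f j = inner Y (y j) / ‖y j‖ (0 if y j = 0)
  set f : Fin K → ℝ := fun j => if y j = 0 then 0 else (inner ℝ Y (y j) : ℝ) / ‖y j‖ with hf
  have hkey : ∀ j, (inner ℝ Y (y j) : ℝ) = f j * ‖y j‖ := by
    intro j
    by_cases h : y j = 0
    · simp [hf, h]
    · simp only [hf, h, if_false]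
      rw [div_mul_cancel₀ _ (norm_ne_zero_iff.mpr h)]
  have hsum : ‖Y‖ ^ 2 = ∑ j, f j * ‖y j‖ := by
    have : (inner ℝ Y Y : ℝ) = ∑ j, (inner ℝ Y (y j) : ℝ) := by
      rw [hY, inner_sum]
    rw [← real_inner_self_eq_norm_sq, this]
    exact Finset.sum_congr rfl fun j _ => hkey j
  -- Fin K nonempty
  have hnonempty : (Finset.univ : Finset (Fin K)).Nonempty := by
    by_contra h
    rw [Finset.not_nonempty_iff_eq_empty] at h
    exact hne (by rw [hY, h, Finset.sum_empty])
  obtain ⟨j₀, _, hj₀⟩ := Finset.exists_max_image Finset.univ f hnonempty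
  have hj₀max : ∀ j, f j ≤ f j₀ := fun j => hj₀ j (Finset.mem_univ j)
  have hM : ‖Y‖ ^ 2 ≤ f j₀ * ∑ j, ‖y j‖ := by
    rw [hsum, Finset.mul_sum]
    refine Finset.sum_le_sum fun j _ => ?_
    exact mul_le_mul_of_nonneg_right (hj₀max j) (norm_nonneg _)
  have hfj₀pos : 0 < f j₀ := by
    by_contra h
    push_neg at h
    nlinarith [sq_nonneg ‖Y‖]
  have hyj₀ne : y j₀ ≠ 0 := by
    intro h
    rw [hf] at hfj₀pos
    simp [h] at hfj₀pos
  -- f j₀ ∈ S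
  have hmem : f j₀ ∈ S := by
    refine ⟨‖y j₀‖⁻¹ • y j₀, ?_, ⟨j₀, Submodule.smul_mem _ _ (hy j₀)⟩, ?_⟩
    · rw [norm_smul]
      simp [norm_ne_zero_iff.mpr hyj₀ne]
    · rw [real_inner_smul_right]
      simp [hf, hyj₀ne, div_eq_inv_mul]
  have hbdd : BddAbove S := by
    refine ⟨‖Y‖, fun r hr => ?_⟩
    obtain ⟨g, hg1, _, rfl⟩ := hr
    calc (inner ℝ Y g : ℝ) ≤ ‖Y‖ * ‖g‖ := real_inner_le_norm Y g
      _ = ‖Y‖ := by rw [hg1, mul_one]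
  have hsup : f j₀ ≤ sSup S := le_csSup hbdd hmem
  rw [ge_iff_le, div_le_div_iff₀ hTpos hYpos]
  nlinarith
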